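/- arXiv:2102.11081 — 3 statements merged into one kernel-verified Lean document; each statement's English description precedes it below -/
import Mathlib

section
/- For every monoid M and every M-set, i.e., every functor X : SingleObj M ⥤ Type, the covariant isotropy group of X in the category of M-sets is isomorphic to the group of invertible elements of the center of M: there is a group isomorphism between Aut(Under.forget X), the group of natural automorphisms of the coslice projection functor Under.forget X : Under X ⥤ (SingleObj M ⥤ Type), and (Submonoid.center M)ˣ. -/
open CategoryTheory

namespace IsotropyAux

variable {M : Type} [Monoid M] (X : SingleObj M ⥤ Type)

/-- `X ⊕ M` with `M` acting freely on the second summand. -/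
def W : SingleObj M ⥤ Type where
  obj _ := X.obj (SingleObj.star M) ⊕ M
  map m := ↾(Sum.map (X.map m) (fun n => m * n))
  map_id x := by
    ext s; cases s with
    | inl a => exact congrArg Sum.inl (FunctorToTypes.map_id_apply X a)
    | inr n => simp [SingleObj.id_as_one]
  map_comp f g := by
    ext s; cases s with
    | inl a => simp [FunctorToTypes.map_comp_apply]
    | inr n => simp [SingleObj.comp_as_mul, mul_assoc]

def ι : X ⟶ W X where
  app _ := ↾Sum.inl
  naturality _ _ _ := rfl

def U₀ : Under X := Under.mk (ι X)

def gN (u : Under X) (y : u.right.obj (SingleObj.star M)) : W X ⟶ u.right where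
  app _ := ↾(Sum.elim (u.hom.app (SingleObj.star M)) (fun m => u.right.map m y))
  naturality _ _ m := by
    ext s; cases s with
    | inl a => exact (types_congr_hom (u.hom.naturality m) a)
    | inr n =>
      show u.right.map (m * n) y = u.right.map m (u.right.map n y)
      rw [← SingleObj.comp_as_mul, FunctorToTypes.map_comp_apply]

def hMor (u : Under X) (y : u.right.obj (SingleObj.star M)) : U₀ X ⟶ u :=
  Under.homMk (gN X u y) (by ext a; rfl)



lemma map_map (Y : SingleObj M ⥤ Type) {o : SingleObj M} (a b : o ⟶ o) (y : Y.obj o) :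
    Y.map a (Y.map b y) = Y.map (a * b : M) y := by
  rw [← SingleObj.comp_as_mul, FunctorToTypes.map_comp_apply]

lemma map_one (Y : SingleObj M ⥤ Type) {o : SingleObj M} (y : Y.obj o) :
    Y.map ((1 : M) : o ⟶ o) y = y := by
  rw [← SingleObj.id_as_one, FunctorToTypes.map_id_apply]

/-- acting by a central element gives an endo-transformation of the coslice projection. -/
def τ (z : M) (hz : z ∈ Submonoid.center M) : Under.forget X ⟶ Under.forget X where
  app u :=
    { app := fun _ => ↾(fun y => u.right.map z y)
      naturality := fun _ _ m => by
        ext y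
        change u.right.obj _ at y
        show u.right.map z (u.right.map m y) = u.right.map m (u.right.map z y)
        rw [← FunctorToTypes.map_comp_apply, ← FunctorToTypes.map_comp_apply,
          SingleObj.comp_as_mul, SingleObj.comp_as_mul,
          (Submonoid.mem_center_iff.mp hz m)] }
  naturality u v h := by
    ext o a
    exact (types_congr_hom (h.right.naturality (z : o ⟶ o)) a).symm

lemma τ_comp (z z' : M) (hz : z ∈ Submonoid.center M) (hz' : z' ∈ Submonoid.center M) :
    τ X z hz ≫ τ X z' hz' = τ X (z' * z) (Submonoid.mul_mem _ hz' hz) := by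
  ext u o a
  exact map_map u.right z' z a

lemma τ_one : τ X 1 (Submonoid.one_mem _) = 𝟙 (Under.forget X) := by
  ext u o a
  exact map_one u.right a

lemma coe_inv_mul (z : (Submonoid.center M)ˣ) :
    ((z⁻¹ : (Submonoid.center M)ˣ).val.val * z.val.val : M) = 1 := by
  rw [← Submonoid.coe_mul, ← Units.val_mul, inv_mul_cancel, Units.val_one,
    OneMemClass.coe_one]

lemma coe_mul_inv (z : (Submonoid.center M)ˣ) :
    (z.val.val * (z⁻¹ : (Submonoid.center M)ˣ).val.val : M) = 1 := by
  rw [← Submonoid.coe_mul, ← Units.val_mul, mul_inv_cancel, Units.val_one,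
    OneMemClass.coe_one]

def ΨAut (z : (Submonoid.center M)ˣ) : Aut (Under.forget X) where
  hom := τ X z.val.val z.val.prop
  inv := τ X (z⁻¹ : (Submonoid.center M)ˣ).val.val (z⁻¹ : (Submonoid.center M)ˣ).val.prop
  hom_inv_id := by
    ext u o a
    change u.right.obj o at a
    show u.right.map _ (u.right.map _ a) = a
    rw [map_map, coe_inv_mul, map_one]
  inv_hom_id := by
    ext u o a
    change u.right.obj o at a
    show u.right.map _ (u.right.map _ a) = a
    rw [map_map, coe_mul_inv, map_one]

def Ψ : (Submonoid.center M)ˣ →* Aut (Under.forget X) where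
  toFun := ΨAut X
  map_one' := by
    apply Iso.ext
    ext u o a
    show u.right.map ((1 : (Submonoid.center M)ˣ) : M) a = a
    exact map_one u.right a
  map_mul' z z' := by
    apply Iso.ext
    ext u o a
    change u.right.obj o at a
    show u.right.map _ a = u.right.map _ (u.right.map _ a)
    rw [map_map]
    rfl


section Extract

variable {M : Type} [Monoid M] {X : SingleObj M ⥤ Type}

local notation "st" => SingleObj.star M

lemma eta_nat (η : Under.forget X ⟶ Under.forget X) {u v : Under X} (h : u ⟶ v)
    (s : u.right.obj st) :
    (η.app v).app st (h.right.app st s) = h.right.app st ((η.app u).app st s) :=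
  types_congr_hom (NatTrans.congr_app (η.naturality h) st) s

lemma eta_equivariant (η : Under.forget X ⟶ Under.forget X) (u : Under X) (m : st ⟶ st)
    (s : u.right.obj st) :
    (η.app u).app st (u.right.map m s) = u.right.map m ((η.app u).app st s) :=
  types_congr_hom ((η.app u).naturality m) s

/-- The key formula: if `η` sends the generator of the free summand to `z`, then every
component of `η` is action by `z`. -/
lemma key (η : Under.forget X ⟶ Under.forget X) (z : M)
    (hz : (η.app (U₀ X)).app st (Sum.inr 1) = Sum.inr z)
    (u : Under X) (y : u.right.obj st) :
    (η.app u).app st y = u.right.map (show st ⟶ st from z) y := by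
  have h := eta_nat η (hMor X u y) (Sum.inr (1 : M))
  have e1 : (hMor X u y).right.app st (Sum.inr (1 : M)) = y := map_one u.right y
  rw [e1, hz] at h
  exact h

def iotaMor : Under.mk (𝟙 X) ⟶ U₀ X :=
  Under.homMk (ι X) (Category.id_comp _)

lemma all_inl (α : Aut (Under.forget X)) {x : X.obj st}
    (hc : (α.hom.app (U₀ X)).app st (Sum.inr 1) = Sum.inl x)
    (s : X.obj st ⊕ M) :
    ∃ x', (α.hom.app (U₀ X)).app st s = Sum.inl x' := by
  cases s with
  | inl x' =>
    exact ⟨(α.hom.app (Under.mk (𝟙 X))).app st x', eta_nat α.hom (iotaMor) x'⟩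
  | inr m =>
    refine ⟨X.map (show st ⟶ st from m) x, ?_⟩
    have h1 := eta_equivariant α.hom (U₀ X) (show st ⟶ st from m) (Sum.inr 1)
    rw [hc] at h1
    have h2 : ((U₀ X).right.map (show st ⟶ st from m) (Sum.inr (1 : M)) : X.obj st ⊕ M)
        = Sum.inr m := by
      show Sum.inr (m * 1) = Sum.inr m
      rw [mul_one]
    rw [h2] at h1
    exact h1

lemma extract (α : Aut (Under.forget X)) :
    ∃ z : M, (α.hom.app (U₀ X)).app st (Sum.inr 1) = Sum.inr z := by
  rcases hc : (α.hom.app (U₀ X)).app st (Sum.inr (1 : M)) with x | z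
  · exfalso
    have hsur : (α.hom.app (U₀ X)).app st
        ((α.inv.app (U₀ X)).app st (Sum.inr (1 : M))) = Sum.inr (1 : M) := by
      exact types_congr_hom
        (NatTrans.congr_app (NatTrans.congr_app α.inv_hom_id (U₀ X)) st) (Sum.inr (1 : M))
    obtain ⟨x', hx'⟩ := all_inl α hc ((α.inv.app (U₀ X)).app st (Sum.inr (1 : M)))
    rw [hx'] at hsur
    exact Sum.inl_ne_inr hsur
  · exact ⟨z, rfl⟩

lemma central_of (α : Aut (Under.forget X)) {z : M}
    (hz : (α.hom.app (U₀ X)).app st (Sum.inr 1) = Sum.inr z) :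
    z ∈ Submonoid.center M := by
  rw [Submonoid.mem_center_iff]
  intro m
  have h1 := eta_equivariant α.hom (U₀ X) (show st ⟶ st from m) (Sum.inr 1)
  rw [hz] at h1
  have h2 : ((U₀ X).right.map (show st ⟶ st from m) (Sum.inr (1 : M)) : X.obj st ⊕ M)
      = Sum.inr m := by
    show Sum.inr (m * 1) = Sum.inr m
    rw [mul_one]
  rw [h2] at h1
  -- h1 : c (inr m) = inr (m * z)
  have h3 := key α.hom z hz (U₀ X) (Sum.inr m)
  -- h3 : c (inr m) = inr (z * m)
  have h4 : (Sum.inr (m * z) : X.obj st ⊕ M) = Sum.inr (z * m) := h1.symm.trans h3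
  exact Sum.inr.inj h4

lemma Psi_surjective : Function.Surjective (Ψ X) := by
  intro α
  obtain ⟨z, hz⟩ := extract α
  obtain ⟨w, hw⟩ := extract α.symm
  have hzc := central_of α hz
  have hwc := central_of α.symm hw
  have hw' : (α.inv.app (U₀ X)).app st (Sum.inr 1) = Sum.inr w := hw
  -- w * z = 1
  have h1 : (α.inv.app (U₀ X)).app st
      ((α.hom.app (U₀ X)).app st (Sum.inr (1 : M))) = Sum.inr (1 : M) := by
    exact types_congr_hom
      (NatTrans.congr_app (NatTrans.congr_app α.hom_inv_id (U₀ X)) st) (Sum.inr (1 : M))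
  rw [hz, key α.inv w hw' (U₀ X) (Sum.inr z)] at h1
  have hwz : w * z = 1 := Sum.inr.inj ((rfl : ((U₀ X).right.map (show st ⟶ st from w)
    (Sum.inr z) : X.obj st ⊕ M) = Sum.inr (w * z)).symm.trans h1)
  -- z * w = 1
  have h2 : (α.hom.app (U₀ X)).app st
      ((α.inv.app (U₀ X)).app st (Sum.inr (1 : M))) = Sum.inr (1 : M) := by
    exact types_congr_hom
      (NatTrans.congr_app (NatTrans.congr_app α.inv_hom_id (U₀ X)) st) (Sum.inr (1 : M))
  rw [hw', key α.hom z hz (U₀ X) (Sum.inr w)] at h2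
  have hzw : z * w = 1 := Sum.inr.inj ((rfl : ((U₀ X).right.map (show st ⟶ st from z)
    (Sum.inr w) : X.obj st ⊕ M) = Sum.inr (z * w)).symm.trans h2)
  refine ⟨⟨⟨z, hzc⟩, ⟨w, hwc⟩, Subtype.ext hzw, Subtype.ext hwz⟩, ?_⟩
  apply Iso.ext
  ext u o a
  exact (key α.hom z hz u a).symm

lemma Psi_injective : Function.Injective (Ψ X) := by
  intro z z' h
  have h1 := types_congr_hom (NatTrans.congr_app
    (NatTrans.congr_app (congrArg Iso.hom h) (U₀ X)) st) (Sum.inr (1 : M))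
  have h2 : (Sum.inr (z.val.val * 1) : X.obj st ⊕ M) = Sum.inr (z'.val.val * 1) := h1
  have h3 := Sum.inr.inj h2
  rw [mul_one, mul_one] at h3
  exact Units.ext (Subtype.ext h3)

end Extract

end IsotropyAux

/-- The covariant isotropy group of any `M`-set `X` (a functor `SingleObj M ⥤ Type`), for a
monoid `M`, is isomorphic to the group of invertible elements of the center of `M`. -/
theorem isotropy_of_MSet_eq_units_center (M : Type) [Monoid M]
    (X : SingleObj M ⥤ Type) :
    Nonempty (Aut (Under.forget X) ≃* (Submonoid.center M)ˣ) := by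
  exact ⟨(MulEquiv.ofBijective (IsotropyAux.Ψ X)
    ⟨IsotropyAux.Psi_injective, IsotropyAux.Psi_surjective⟩).symm⟩
end

section
/- For every group G and every G-set, i.e., every functor X : SingleObj G ⥤ Type, the covariant isotropy group of X in the category of G-sets is isomorphic to the center of G: there is a group isomorphism between Aut(Under.forget X), the group of natural automorphisms of the coslice projection functor Under.forget X : Under X ⥤ (SingleObj G ⥤ Type), and the center Subgroup.center G. -/
open CategoryTheory

namespace IsotropyGSetAux

variable {G : Type} [Group G] (X : SingleObj G ⥤ Type)

/-- The coproduct of `X` with the free `G`-set `G`. -/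
def F : SingleObj G ⥤ Type where
  obj _ := X.obj (SingleObj.star G) ⊕ G
  map g := TypeCat.ofHom (Sum.map (X.map g) (g * ·))
  map_id j := by
    ext s
    cases s with
    | inl x =>
      show Sum.inl (X.map (𝟙 j) x) = Sum.inl x
      rw [CategoryTheory.Functor.map_id]
      rfl
    | inr b =>
      show Sum.inr ((𝟙 j : G) * b) = Sum.inr b
      rw [SingleObj.id_as_one, one_mul]
  map_comp f g := by
    ext s
    cases s with
    | inl x =>
      show Sum.inl (X.map (f ≫ g) x) = Sum.inl (X.map g (X.map f x))
      rw [CategoryTheory.Functor.map_comp]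
      rfl
    | inr b =>
      show Sum.inr ((f ≫ g : G) * b) = Sum.inr ((g : G) * ((f : G) * b))
      rw [SingleObj.comp_as_mul, mul_assoc]

/-- The inclusion of `X` into `F X`. -/
def ι : X ⟶ F X where
  app _ := TypeCat.ofHom Sum.inl
  naturality _ _ g := by ext x; rfl

/-- The universal map out of `F X` to any object under `X`, sending `inr 1` to `y`. -/
def toA (A : Under X) (y : A.right.obj (SingleObj.star G)) : Under.mk (ι X) ⟶ A :=
  Under.homMk
    { app := fun _ => TypeCat.ofHom (Sum.elim (A.hom.app (SingleObj.star G)) (fun b => A.right.map b y))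
      naturality := by
        intro _ _ g
        ext s
        cases s with
        | inl x => exact types_congr_hom (A.hom.naturality g) x
        | inr b =>
          show A.right.map (g * b) y = A.right.map g (A.right.map b y)
          rw [← SingleObj.comp_as_mul, CategoryTheory.Functor.map_comp]
          rfl }
    (by
      apply NatTrans.ext
      funext j
      ext x
      rfl)

lemma key (θ : Under.forget X ⟶ Under.forget X) (A : Under X)
    (y : A.right.obj (SingleObj.star G)) :
    (θ.app A).app (SingleObj.star G) y =
      Sum.elim (A.hom.app (SingleObj.star G)) (fun b => A.right.map b y)
        ((θ.app (Under.mk (ι X))).app (SingleObj.star G) (Sum.inr 1)) := by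
  have h := types_congr_hom (congr_arg (fun n => n.app (SingleObj.star G))
    (θ.naturality (toA X A y))) (Sum.inr (1 : G))
  simp only [NatTrans.comp_app, types_comp_apply] at h
  have h1 : ((Under.forget X).map (toA X A y)).app (SingleObj.star G) (Sum.inr (1 : G)) = y := by
    show A.right.map (1 : G) y = y
    rw [← SingleObj.id_as_one, CategoryTheory.Functor.map_id]
    rfl
  change (θ.app A).app _ (((Under.forget X).map (toA X A y)).app _ (Sum.inr 1)) =
    ((Under.forget X).map (toA X A y)).app _ ((θ.app (Under.mk (ι X))).app _ (Sum.inr 1)) at h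
  rw [h1] at h
  exact h

/-- The natural transformation given by the action of a central element. -/
def act (z : G) (hz : z ∈ Subgroup.center G) : Under.forget X ⟶ Under.forget X where
  app A :=
    { app := fun _ => TypeCat.ofHom (fun y => A.right.map z y)
      naturality := by
        intro _ _ g
        ext (y : A.right.obj _)
        show A.right.map z (A.right.map g y) = A.right.map g (A.right.map z y)
        rw [← types_comp_apply (A.right.map g) (A.right.map z),
          ← types_comp_apply (A.right.map z) (A.right.map g),
          ← CategoryTheory.Functor.map_comp, ← CategoryTheory.Functor.map_comp,
          SingleObj.comp_as_mul, SingleObj.comp_as_mul,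
          (Subgroup.mem_center_iff.mp hz g)] }
  naturality A B m := by
    apply NatTrans.ext
    funext j
    ext y
    exact (types_congr_hom (m.right.naturality z) y).symm

/-- The action of a central element as a natural automorphism. -/
def actIso (z : Subgroup.center G) : Aut (Under.forget X) where
  hom := act X z.1 z.2
  inv := act X (z.1⁻¹) (Subgroup.inv_mem _ z.2)
  hom_inv_id := by
    apply NatTrans.ext
    funext A
    apply NatTrans.ext
    funext j
    ext (y : A.right.obj _)
    show A.right.map z.1⁻¹ (A.right.map z.1 y) = y
    rw [← types_comp_apply (A.right.map z.1) (A.right.map z.1⁻¹),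
      ← CategoryTheory.Functor.map_comp, SingleObj.comp_as_mul, inv_mul_cancel,
      ← SingleObj.id_as_one, CategoryTheory.Functor.map_id]
    rfl
  inv_hom_id := by
    apply NatTrans.ext
    funext A
    apply NatTrans.ext
    funext j
    ext (y : A.right.obj _)
    show A.right.map z.1 (A.right.map z.1⁻¹ y) = y
    rw [← types_comp_apply (A.right.map z.1⁻¹) (A.right.map z.1),
      ← CategoryTheory.Functor.map_comp, SingleObj.comp_as_mul, mul_inv_cancel,
      ← SingleObj.id_as_one, CategoryTheory.Functor.map_id]
    rfl

/-- The group homomorphism from the center to the isotropy group. -/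
def Ψ : Subgroup.center G →* Aut (Under.forget X) where
  toFun := actIso X
  map_one' := by
    apply Iso.ext
    apply NatTrans.ext
    funext A
    apply NatTrans.ext
    funext j
    ext y
    show A.right.map ((1 : Subgroup.center G) : G) y = y
    exact types_congr_hom (A.right.map_id (SingleObj.star G)) y
  map_mul' z w := by
    apply Iso.ext
    apply NatTrans.ext
    funext A
    apply NatTrans.ext
    funext j
    ext (y : A.right.obj _)
    show A.right.map (z.1 * w.1) y = A.right.map z.1 (A.right.map w.1 y)
    rw [← types_comp_apply (A.right.map w.1) (A.right.map z.1),
      ← CategoryTheory.Functor.map_comp, SingleObj.comp_as_mul]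

lemma Ψ_bijective : Function.Bijective (Ψ X) := by
  constructor
  · intro z w h
    have h2 : (Sum.inr (z.1 * 1) : X.obj (SingleObj.star G) ⊕ G) = Sum.inr (w.1 * 1) :=
      congr_arg (fun θ : Aut (Under.forget X) =>
        (θ.hom.app (Under.mk (ι X))).app (SingleObj.star G) (Sum.inr (1 : G))) h
    ext
    simpa using h2
  · intro θ
    cases hh : (θ.hom.app (Under.mk (ι X))).app (SingleObj.star G) (Sum.inr (1 : G)) with
    | inl x₀ =>
      exfalso
      set t' := (θ.inv.app (Under.mk (ι X))).app (SingleObj.star G) (Sum.inr (1 : G)) with ht'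
      have h1 := key X θ.hom (Under.mk (ι X)) t'
      rw [hh] at h1
      have h2 : (θ.hom.app (Under.mk (ι X))).app (SingleObj.star G) t' = Sum.inr (1 : G) := by
        have e1 : θ.inv.app (Under.mk (ι X)) ≫ θ.hom.app (Under.mk (ι X)) = 𝟙 _ :=
          θ.inv_hom_id_app (Under.mk (ι X))
        exact types_congr_hom (congr_arg
          (fun n : F X ⟶ F X => n.app (SingleObj.star G)) e1) (Sum.inr (1 : G))
      have h3 : (Sum.inr (1 : G) : X.obj (SingleObj.star G) ⊕ G) = Sum.inl x₀ :=
        h2.symm.trans (h1.trans rfl)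
      cases h3
    | inr z =>
      have hcen : z ∈ Subgroup.center G := by
        rw [Subgroup.mem_center_iff]
        intro g
        have hnat := types_congr_hom (@NatTrans.naturality _ _ _ _ _ _
          (θ.hom.app (Under.mk (ι X))) (SingleObj.star G) (SingleObj.star G) g)
          (Sum.inr (1 : G))
        have hl : (((Under.forget X).obj (Under.mk (ι X))).map
              (show SingleObj.star G ⟶ SingleObj.star G from g) ≫
              (θ.hom.app (Under.mk (ι X))).app (SingleObj.star G))
            (Sum.inr 1) = (θ.hom.app (Under.mk (ι X))).app (SingleObj.star G)
              (Sum.inr (g * 1)) := rfl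
        have hr : ((θ.hom.app (Under.mk (ι X))).app (SingleObj.star G) ≫
              ((Under.forget X).obj (Under.mk (ι X))).map
                (show SingleObj.star G ⟶ SingleObj.star G from g))
            (Sum.inr 1) = Sum.inr (g * z) := by
          show ((Under.forget X).obj (Under.mk (ι X))).map
              (show SingleObj.star G ⟶ SingleObj.star G from g)
              ((θ.hom.app (Under.mk (ι X))).app (SingleObj.star G)
                (Sum.inr 1)) = Sum.inr (g * z)
          rw [hh]
          rfl
        rw [hl, hr, mul_one] at hnat
        have hkey := key X θ.hom (Under.mk (ι X)) (Sum.inr g)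
        rw [hh] at hkey
        have : (Sum.inr (g * z) : X.obj (SingleObj.star G) ⊕ G) = Sum.inr (z * g) := by
          rw [← hnat, hkey]; rfl
        exact Sum.inr.injEq _ _ ▸ this
      refine ⟨⟨z, hcen⟩, ?_⟩
      apply Iso.ext
      apply NatTrans.ext
      funext A
      apply NatTrans.ext
      funext j
      ext (y : A.right.obj _)
      have hk := (key X θ.hom A y).symm
      rw [hh] at hk
      exact hk

end IsotropyGSetAux

/-- The covariant isotropy group of any `G`-set `X` (a functor `SingleObj G ⥤ Type`), for a
group `G`, is isomorphic to the center of `G`. -/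
theorem isotropy_of_GSet_eq_center (G : Type) [Group G]
    (X : SingleObj G ⥤ Type) :
    Nonempty (Aut (Under.forget X) ≃* Subgroup.center G) := by
  exact ⟨(MulEquiv.ofBijective (IsotropyGSetAux.Ψ X) (IsotropyGSetAux.Ψ_bijective X)).symm⟩
end

section
/- Let J be a rigid small category, i.e., one in which every isomorphism i ≅ i from an object to itself has hom-component equal to the identity (in particular every preorder or poset category is rigid). Then the covariant isotropy of the presheaf category J ⥤ Type is trivial: for every functor F : J ⥤ Type, every natural automorphism of the coslice projection functor Under.forget F : Under F ⥤ (J ⥤ Type) is equal to the identity natural transformation. -/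
open CategoryTheory

namespace IsotropyAux

variable {J : Type} [SmallCategory J]

/-- `F ⊕ coyoneda(j)`, built explicitly. -/
@[simps] def P (F : J ⥤ Type) (j : J) : J ⥤ Type where
  obj k := F.obj k ⊕ (j ⟶ k)
  map {k k'} χ := TypeCat.ofHom (Sum.map (F.map χ) (fun τ => τ ≫ χ))
  map_id k := by ext z; cases z <;> simp
  map_comp χ χ' := by ext z; cases z <;> simp

@[simps] def inlNat (F : J ⥤ Type) (j : J) : F ⟶ P F j where
  app k := TypeCat.ofHom Sum.inl
  naturality _ _ _ := by rfl

/-- The classifying map `P F j ⟶ G` for `x : G.obj j`, under `F`. -/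
@[simps] def classify (F : J ⥤ Type) (j : J) {G : J ⥤ Type} (f : F ⟶ G) (x : G.obj j) :
    P F j ⟶ G where
  app k := TypeCat.ofHom (Sum.elim (f.app k) (fun τ => G.map τ x))
  naturality k k' χ := by
    ext z
    cases z with
    | inl a => exact ConcreteCategory.congr_hom (f.naturality χ) a
    | inr τ => exact G.map_comp_apply τ χ x

lemma key_s18 (F : J ⥤ Type) (σ : Under.forget F ⟶ Under.forget F) (X : Under F) (j : J)
    (x : X.right.obj j) :
    (σ.app X).app j x =
      (classify F j X.hom x).app j
        ((σ.app (Under.mk (inlNat F j))).app j (Sum.inr (𝟙 j) : F.obj j ⊕ (j ⟶ j))) := by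
  have tri : (Under.mk (inlNat F j)).hom ≫ classify F j X.hom x = X.hom := by
    ext k a; rfl
  let m : Under.mk (inlNat F j) ⟶ X := Under.homMk (classify F j X.hom x) tri
  have h := σ.naturality m
  have h2 := ConcreteCategory.congr_hom (NatTrans.congr_app h j) (Sum.inr (𝟙 j) : F.obj j ⊕ (j ⟶ j))
  rw [NatTrans.comp_app, NatTrans.comp_app] at h2
  have h3 : (σ.app X).app j (X.right.map (𝟙 j) x) = _ := h2
  rw [Functor.map_id_apply] at h3
  exact h3

end IsotropyAux

/-- If `J` is a rigid small category (one in which every isomorphism of an object with itself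
is the identity, e.g. a preorder), then the presheaf category `J ⥤ Type` has trivial
covariant isotropy: every natural automorphism of the coslice projection functor
`Under.forget F : Under F ⥤ (J ⥤ Type)` is the identity. -/
theorem isotropy_of_presheaf_trivial_of_rigid (J : Type) [SmallCategory J]
    (hJ : ∀ (i : J) (φ : i ≅ i), φ.hom = 𝟙 i)
    (F : J ⥤ Type) (α : Aut (Under.forget F)) :
    α.hom = 𝟙 (Under.forget F) := by
  have inj : ∀ (X : Under F) (j : J) (z w : X.right.obj j),
      (α.hom.app X).app j z = (α.hom.app X).app j w → z = w := by
    intro X j z w h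
    have hz : (α.inv.app X).app j ((α.hom.app X).app j z) = z := ConcreteCategory.congr_hom (NatTrans.congr_app (NatTrans.congr_app α.hom_inv_id X) j) z
    have hw : (α.inv.app X).app j ((α.hom.app X).app j w) = w := ConcreteCategory.congr_hom (NatTrans.congr_app (NatTrans.congr_app α.hom_inv_id X) j) w
    rw [← hz, ← hw, h]
  have invhom : ∀ (X : Under F) (j : J) (z : X.right.obj j),
      (α.inv.app X).app j ((α.hom.app X).app j z) = z := by
    intro X j z
    have := ConcreteCategory.congr_hom (NatTrans.congr_app (NatTrans.congr_app α.hom_inv_id X) j) z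
    exact this
  have hominv : ∀ (X : Under F) (j : J) (z : X.right.obj j),
      (α.hom.app X).app j ((α.inv.app X).app j z) = z := by
    intro X j z
    have := ConcreteCategory.congr_hom (NatTrans.congr_app (NatTrans.congr_app α.inv_hom_id X) j) z
    exact this
  have hu : ∀ j : J, (α.hom.app (Under.mk (IsotropyAux.inlNat F j))).app j
      (Sum.inr (𝟙 j) : F.obj j ⊕ (j ⟶ j)) = Sum.inr (𝟙 j) := by
    intro j
    rcases hcase : (α.hom.app (Under.mk (IsotropyAux.inlNat F j))).app j (Sum.inr (𝟙 j) : F.obj j ⊕ (j ⟶ j))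
      with a | φ
    · exfalso
      have h1 := IsotropyAux.key_s18 F α.hom (Under.mk (IsotropyAux.inlNat F j)) j (Sum.inl a)
      rw [hcase] at h1
      simp only [IsotropyAux.classify_app, Sum.elim_inl] at h1
      have h2 := inj _ j _ _ (h1.trans hcase.symm)
      exact Sum.inl_ne_inr h2
    · rcases hv : (α.inv.app (Under.mk (IsotropyAux.inlNat F j))).app j (Sum.inr (𝟙 j) : F.obj j ⊕ (j ⟶ j))
        with b | ψ
      · exfalso
        have hβφ : (α.inv.app (Under.mk (IsotropyAux.inlNat F j))).app j (Sum.inr φ)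
            = Sum.inr (𝟙 j) := by
          rw [← hcase]; exact invhom _ j _
        have h1 := IsotropyAux.key_s18 F α.inv (Under.mk (IsotropyAux.inlNat F j)) j (Sum.inr φ)
        rw [hv, hβφ] at h1
        exact Sum.inr_ne_inl h1
      · have hβφ : (α.inv.app (Under.mk (IsotropyAux.inlNat F j))).app j (Sum.inr φ)
            = Sum.inr (𝟙 j) := by
          rw [← hcase]; exact invhom _ j _
        have hαψ : (α.hom.app (Under.mk (IsotropyAux.inlNat F j))).app j (Sum.inr ψ)
            = Sum.inr (𝟙 j) := by
          rw [← hv]; exact hominv _ j _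
        have hφψ : φ ≫ ψ = 𝟙 j := by
          have h1 := IsotropyAux.key_s18 F α.inv (Under.mk (IsotropyAux.inlNat F j)) j (Sum.inr φ)
          rw [hv, hβφ] at h1
          simp only [IsotropyAux.classify_app, Sum.elim_inr, IsotropyAux.P_map,
            Sum.map_inr] at h1
          exact (Sum.inr.inj h1).symm
        have hψφ : ψ ≫ φ = 𝟙 j := by
          have h1 := IsotropyAux.key_s18 F α.hom (Under.mk (IsotropyAux.inlNat F j)) j (Sum.inr ψ)
          rw [hcase, hαψ] at h1
          simp only [IsotropyAux.classify_app, Sum.elim_inr, IsotropyAux.P_map,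
            Sum.map_inr] at h1
          exact (Sum.inr.inj h1).symm
        have hφ : φ = 𝟙 j := hJ j (Iso.mk φ ψ hφψ hψφ)
        rw [hφ]
  apply NatTrans.ext
  funext X
  apply NatTrans.ext
  funext j
  ext x
  have h := IsotropyAux.key_s18 F α.hom X j x
  rw [hu j] at h
  have h' : (α.hom.app X).app j x = X.right.map (𝟙 j) x := h
  exact h'.trans (X.right.map_id_apply j x)
end
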